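/- For all real δ, y with 0 < δ ≤ 1/e and y > 0, the integral ∫₀^δ sqrt((1/t)·log(1/(t+y))) dt (interpreting negative values of the logarithm as contributing via its square root only where nonnegative, i.e., assuming t + y ≤ 1 on the region of integration or defining sqrt of a negative number as 0) is at most 4·sqrt(δ·log(1/max(δ,y))). -/

import Mathlib

open MeasureTheory

lemma phi_bound {t : ℝ} (ht : 0 < t) :
    Real.sqrt ((1 / t) * Real.log (1 / t)) ≤ Real.sqrt 2 * t ^ (-(3/4 : ℝ)) := by
  have h1 : Real.log (1 / t) ≤ 2 * t ^ (-(1/2 : ℝ)) := by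
    have h := Real.log_le_rpow_div (x := 1 / t) (ε := 1/2) (by positivity) (by norm_num)
    calc Real.log (1 / t) ≤ (1 / t) ^ (1/2 : ℝ) / (1/2) := h
      _ = 2 * t ^ (-(1/2 : ℝ)) := by
          rw [one_div, Real.inv_rpow ht.le, ← Real.rpow_neg ht.le]
          ring
  calc Real.sqrt ((1 / t) * Real.log (1 / t))
      ≤ Real.sqrt ((1 / t) * (2 * t ^ (-(1/2 : ℝ)))) := by
        apply Real.sqrt_le_sqrt
        exact mul_le_mul_of_nonneg_left h1 (by positivity)
    _ = Real.sqrt 2 * t ^ (-(3/4 : ℝ)) := by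
        rw [show (1 / t) * (2 * t ^ (-(1/2 : ℝ))) = 2 * (t ^ (-(1:ℝ)) * t ^ (-(1/2 : ℝ))) by
              rw [Real.rpow_neg_one]; ring,
            ← Real.rpow_add ht, Real.sqrt_mul (by norm_num)]
        congr 1
        rw [Real.sqrt_eq_rpow, ← Real.rpow_mul ht.le]
        norm_num

lemma int_phi (δ : ℝ) (hδ0 : 0 < δ) :
    IntegrableOn (fun t => Real.sqrt ((1 / t) * Real.log (1 / t))) (Set.Ioc 0 δ) := by
  have hb : IntegrableOn (fun t : ℝ => Real.sqrt 2 * t ^ (-(3/4 : ℝ))) (Set.Ioc 0 δ) := by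
    have h := (intervalIntegral.intervalIntegrable_rpow' (r := -(3/4)) (a := 0) (b := δ)
      (by norm_num)).const_mul (Real.sqrt 2)
    exact (intervalIntegrable_iff_integrableOn_Ioc_of_le hδ0.le).mp h
  refine hb.mono' ?_ ?_
  · exact (Real.continuous_sqrt.measurable.comp
      ((measurable_const.div measurable_id).mul
        (Real.measurable_log.comp (measurable_const.div measurable_id)))).aestronglyMeasurable
  · filter_upwards [ae_restrict_mem measurableSet_Ioc] with t ht
    rw [Real.norm_eq_abs, abs_of_nonneg (Real.sqrt_nonneg _)]
    exact phi_bound ht.1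

lemma key_int (δ : ℝ) (hδ0 : 0 < δ) (hδ : δ ≤ 1 / Real.exp 1) :
    ∫ t in Set.Ioc (0 : ℝ) δ, Real.sqrt ((1 / t) * Real.log (1 / t)) ≤
      2 * Real.sqrt (δ * Real.log (1 / δ)) + 2 * Real.sqrt δ := by
  set G : ℝ → ℝ := fun t => 2 * Real.sqrt (-(t * Real.log t)) + 2 * Real.sqrt t with hGdef
  set g' : ℝ → ℝ := fun t =>
      2 * ((-(Real.log t + 1)) / (2 * Real.sqrt (-(t * Real.log t)))) + 2 * (1 / (2 * Real.sqrt t))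
    with hg'def
  have hlogt : ∀ t : ℝ, t ∈ Set.Ioo (0:ℝ) δ → Real.log t < -1 := by
    intro t ht
    have h2 : t < 1 / Real.exp 1 := lt_of_lt_of_le ht.2 hδ
    have := Real.log_lt_log ht.1 h2
    rwa [one_div, Real.log_inv, Real.log_exp] at this
  have hderiv : ∀ t ∈ Set.Ioo (0:ℝ) δ, HasDerivWithinAt G (g' t) (Set.Ioi t) t := by
    intro t ht
    have hL : 0 < -(t * Real.log t) := by nlinarith [hlogt t ht, ht.1]
    have hu : HasDerivAt (fun s : ℝ => -(s * Real.log s)) (-(Real.log t + 1)) t :=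
      (Real.hasDerivAt_mul_log ht.1.ne').neg
    have h1 := hu.sqrt hL.ne'
    have h2 := Real.hasDerivAt_sqrt ht.1.ne'
    exact (((h1.const_mul 2).add (h2.const_mul 2)).hasDerivWithinAt)
  have hcont : ContinuousOn G (Set.Icc 0 δ) := by
    apply Continuous.continuousOn
    exact (continuous_const.mul (Real.continuous_sqrt.comp Real.continuous_mul_log.neg)).add
      (continuous_const.mul Real.continuous_sqrt)
  have hint : IntegrableOn (fun t => Real.sqrt ((1 / t) * Real.log (1 / t))) (Set.Icc 0 δ) :=
    (integrableOn_Icc_iff_integrableOn_Ioc).mpr (int_phi δ hδ0)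
  have hle : ∀ t ∈ Set.Ioo (0:ℝ) δ, Real.sqrt ((1 / t) * Real.log (1 / t)) ≤ g' t := by
    intro t ht
    have ht0 : 0 < t := ht.1
    have hLt : Real.log t < -1 := hlogt t ht
    set L : ℝ := -Real.log t with hLdef
    have hL1 : 1 < L := by simp [hLdef]; linarith
    have hlog1t : Real.log (1 / t) = L := by rw [one_div, Real.log_inv]
    have hmul : -(t * Real.log t) = t * L := by rw [hLdef]; ring
    have hs : 0 < Real.sqrt t := Real.sqrt_pos.mpr ht0
    have hl : 1 ≤ Real.sqrt L := by
      rw [show (1:ℝ) = Real.sqrt 1 by simp]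
      exact Real.sqrt_le_sqrt hL1.le
    have hl0 : 0 < Real.sqrt L := lt_of_lt_of_le one_pos hl
    have hLsq : Real.sqrt L ^ 2 = L := Real.sq_sqrt (by linarith)
    have htsq : Real.sqrt t ^ 2 = t := Real.sq_sqrt ht0.le
    have hlhs : Real.sqrt ((1 / t) * Real.log (1 / t)) = Real.sqrt L / Real.sqrt t := by
      rw [hlog1t, one_div, Real.sqrt_mul (by positivity), Real.sqrt_inv]
      ring
    have hg'eq : g' t = (L - 1) / (Real.sqrt t * Real.sqrt L) + 1 / Real.sqrt t := by
      rw [hg'def]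
      simp only
      rw [hmul, Real.sqrt_mul ht0.le]
      field_simp
      ring_nf
      linarith [hLdef]
    rw [hlhs, hg'eq]
    rw [div_add_div _ _ (by positivity) hs.ne', div_le_div_iff₀ hs (by positivity)]
    nlinarith [sq_nonneg (Real.sqrt L - 1)]
  have hmono := intervalIntegral.integral_le_sub_of_hasDeriv_right_of_le hδ0.le hcont hderiv
    hint hle
  rw [intervalIntegral.integral_of_le hδ0.le] at hmono
  have hG0 : G 0 = 0 := by simp [hGdef]
  have hGδ : G δ = 2 * Real.sqrt (δ * Real.log (1 / δ)) + 2 * Real.sqrt δ := by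
    rw [hGdef]
    simp only
    rw [show -(δ * Real.log δ) = δ * Real.log (1/δ) by rw [one_div, Real.log_inv]; ring]
  rw [hG0, hGδ, sub_zero] at hmono
  exact hmono


/-- Observation (Gamma-integral bound, general `y`): for `0 < δ ≤ 1/e` and `y > 0`,
`∫₀^δ √(max 0 (log(1/(t+y)))/t) dt ≤ 4·√(δ·log(1/max δ y))`. -/
theorem integral_sqrt_log_shift_le (δ y : ℝ) (hδ0 : 0 < δ) (hδ : δ ≤ 1 / Real.exp 1)
    (hy : 0 < y) :
    ∫ t in Set.Ioc (0 : ℝ) δ,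
        Real.sqrt ((1 / t) * max 0 (Real.log (1 / (t + y)))) ≤
      4 * Real.sqrt (δ * Real.log (1 / max δ y)) := by
  have he1 : (1:ℝ) ≤ Real.exp 1 := by
    have := Real.add_one_le_exp (1:ℝ); linarith
  have hδ1 : δ ≤ 1 := le_trans hδ (by rw [div_le_one (by positivity)]; exact he1)
  rcases le_total y δ with hyδ | hδy
  · -- case y ≤ δ
    rw [max_eq_left hyδ]
    have hpt : ∀ t ∈ Set.Ioc (0:ℝ) δ,
        Real.sqrt ((1 / t) * max 0 (Real.log (1 / (t + y)))) ≤
          Real.sqrt ((1 / t) * Real.log (1 / t)) := by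
      intro t ht
      have ht0 : 0 < t := ht.1
      have hmax : max 0 (Real.log (1 / (t + y))) ≤ Real.log (1 / t) := by
        apply max_le
        · apply Real.log_nonneg
          rw [le_div_iff₀ ht0]
          linarith [le_trans ht.2 hδ1]
        · apply Real.log_le_log (by positivity)
          exact one_div_le_one_div_of_le ht0 (le_add_of_nonneg_right hy.le)
      exact Real.sqrt_le_sqrt (mul_le_mul_of_nonneg_left hmax (by positivity))
    have hfint : IntegrableOn
        (fun t => Real.sqrt ((1 / t) * max 0 (Real.log (1 / (t + y))))) (Set.Ioc 0 δ) := by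
      refine (int_phi δ hδ0).mono' ?_ ?_
      · exact (Real.continuous_sqrt.measurable.comp
          ((measurable_const.div measurable_id).mul
            ((measurable_const.max (Real.measurable_log.comp
              (measurable_const.div (measurable_id.add_const y))))))).aestronglyMeasurable
      · filter_upwards [ae_restrict_mem measurableSet_Ioc] with t ht
        rw [Real.norm_eq_abs, abs_of_nonneg (Real.sqrt_nonneg _)]
        exact hpt t ht
    have h1 := MeasureTheory.setIntegral_mono_on hfint (int_phi δ hδ0) measurableSet_Ioc hpt
    have h2 := key_int δ hδ0 hδ
    have h3 : Real.sqrt δ ≤ Real.sqrt (δ * Real.log (1 / δ)) := by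
      apply Real.sqrt_le_sqrt
      have hL : 1 ≤ Real.log (1 / δ) := by
        rw [Real.le_log_iff_exp_le (by positivity), le_div_iff₀ hδ0]
        have hδe : δ * Real.exp 1 ≤ 1 := (le_div_iff₀ (by positivity)).mp hδ
        linarith [mul_comm δ (Real.exp 1)]
      nlinarith
    linarith
  · -- case δ ≤ y
    rw [max_eq_right hδy]
    by_cases hc : Real.log (1 / y) ≤ 0
    · have hz : Set.EqOn
          (fun t => Real.sqrt ((1 / t) * max 0 (Real.log (1 / (t + y))))) 0 (Set.Ioc 0 δ) := by
        intro t ht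
        have ht0 : 0 < t := ht.1
        have hlog : Real.log (1 / (t + y)) ≤ 0 := by
          refine le_trans ?_ hc
          apply Real.log_le_log (by positivity)
          exact one_div_le_one_div_of_le hy (le_add_of_nonneg_left ht0.le)
        simp only [Pi.zero_apply, max_eq_left hlog, mul_zero, Real.sqrt_zero]
      rw [MeasureTheory.setIntegral_congr_fun measurableSet_Ioc hz]
      simp only [Pi.zero_apply, MeasureTheory.integral_zero]
      positivity
    · push_neg at hc
      set c : ℝ := Real.log (1 / y) with hcdef
      have hpt : ∀ t ∈ Set.Ioc (0:ℝ) δ,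
          Real.sqrt ((1 / t) * max 0 (Real.log (1 / (t + y)))) ≤
            Real.sqrt c * t ^ (-(1/2 : ℝ)) := by
        intro t ht
        have ht0 : 0 < t := ht.1
        have hmax : max 0 (Real.log (1 / (t + y))) ≤ c := by
          apply max_le hc.le
          apply Real.log_le_log (by positivity)
          exact one_div_le_one_div_of_le hy (le_add_of_nonneg_left ht0.le)
        calc Real.sqrt ((1 / t) * max 0 (Real.log (1 / (t + y))))
            ≤ Real.sqrt ((1 / t) * c) :=
              Real.sqrt_le_sqrt (mul_le_mul_of_nonneg_left hmax (by positivity))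
          _ = Real.sqrt c * t ^ (-(1/2 : ℝ)) := by
              rw [one_div, Real.sqrt_mul (by positivity), Real.sqrt_inv, mul_comm]
              congr 1
              rw [Real.rpow_neg ht0.le, Real.sqrt_eq_rpow]
      have hbint : IntegrableOn (fun t : ℝ => Real.sqrt c * t ^ (-(1/2 : ℝ))) (Set.Ioc 0 δ) :=
        (intervalIntegrable_iff_integrableOn_Ioc_of_le hδ0.le).mp
          ((intervalIntegral.intervalIntegrable_rpow' (r := -(1/2)) (a := 0) (b := δ)
            (by norm_num)).const_mul (Real.sqrt c))
      have hfint : IntegrableOn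
          (fun t => Real.sqrt ((1 / t) * max 0 (Real.log (1 / (t + y))))) (Set.Ioc 0 δ) := by
        refine hbint.mono' ?_ ?_
        · exact (Real.continuous_sqrt.measurable.comp
            ((measurable_const.div measurable_id).mul
              ((measurable_const.max (Real.measurable_log.comp
                (measurable_const.div (measurable_id.add_const y))))))).aestronglyMeasurable
        · filter_upwards [ae_restrict_mem measurableSet_Ioc] with t ht
          rw [Real.norm_eq_abs, abs_of_nonneg (Real.sqrt_nonneg _)]
          exact hpt t ht
      have h1 := MeasureTheory.setIntegral_mono_on hfint hbint measurableSet_Ioc hpt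
      have hint12 : ∫ t in Set.Ioc (0:ℝ) δ, t ^ (-(1/2 : ℝ)) = 2 * Real.sqrt δ := by
        rw [← intervalIntegral.integral_of_le hδ0.le, integral_rpow (Or.inl (by norm_num)),
          Real.zero_rpow (by norm_num), Real.sqrt_eq_rpow]
        norm_num
        ring
      have h2 : ∫ t in Set.Ioc (0:ℝ) δ, Real.sqrt c * t ^ (-(1/2 : ℝ)) =
          Real.sqrt c * (2 * Real.sqrt δ) := by
        rw [MeasureTheory.integral_const_mul, hint12]
      rw [h2] at h1
      have h3 : Real.sqrt c * (2 * Real.sqrt δ) ≤ 4 * Real.sqrt (δ * c) := by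
        rw [Real.sqrt_mul hδ0.le]
        nlinarith [Real.sqrt_nonneg c, Real.sqrt_nonneg δ]
      linarith
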